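/- For each n ≥ 1, the set {[ad_T^i(A), ad_T^j(A)] : i > j ≥ 0, i + j = n} is a linearly independent subset of the free Lie algebra L(T,A) over ℚ. -/

import Mathlib

noncomputable section

namespace Stmt14

abbrev L := FreeLieAlgebra ℚ (Fin 2)

def T : L := FreeLieAlgebra.of ℚ 0

def A : L := FreeLieAlgebra.of ℚ 1

attribute [local instance 100] LieRing.ofAssociativeRing

abbrev P := MvPolynomial (Fin 2) ℚ
abbrev V := ℚ × P × P

def xx : P := MvPolynomial.X 0
def yy : P := MvPolynomial.X 1

def S : P →ₗ[ℚ] P := (MvPolynomial.rename (fun _ : Fin 2 => (1 : Fin 2))).toLinearMap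

lemma S_x_pow (k : ℕ) : S (xx ^ k) = yy ^ k := by
  simp [S, xx, yy]

lemma S_mul (p q : P) : S (p * q) = S p * S q := by
  simp [S]

def Th : Module.End ℚ V where
  toFun v := (0, xx * v.2.1, (xx + yy) * v.2.2)
  map_add' u v := by
    simp [mul_add, Prod.ext_iff]
  map_smul' c v := by
    simp [Prod.ext_iff, mul_smul_comm]

def Ah : Module.End ℚ V where
  toFun v := (0, MvPolynomial.C v.1, S v.2.1)
  map_add' u v := by
    simp [Prod.ext_iff]
  map_smul' c v := by
    simp [Prod.ext_iff, MvPolynomial.smul_eq_C_mul, Algebra.smul_def, S_mul, S, map_mul]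

@[simp] lemma Th_apply (c : ℚ) (p q : P) : Th (c, p, q) = (0, xx * p, (xx + yy) * q) := rfl
@[simp] lemma Ah_apply (c : ℚ) (p q : P) : Ah (c, p, q) = (0, MvPolynomial.C c, S p) := rfl

def φ : L →ₗ⁅ℚ⁆ Module.End ℚ V := FreeLieAlgebra.lift ℚ ![Th, Ah]

lemma φ_T : φ T = Th := by simp [φ, T, FreeLieAlgebra.lift_of_apply]
lemma φ_A : φ A = Ah := by simp [φ, A, FreeLieAlgebra.lift_of_apply]

lemma φ_ad_pow (k : ℕ) :
    φ (((LieAlgebra.ad ℚ L T) ^ k) A)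
      = ((LieAlgebra.ad ℚ (Module.End ℚ V) Th) ^ k) Ah := by
  induction k with
  | zero => simp [φ_A]
  | succ k ih =>
    rw [pow_succ', pow_succ']
    simp only [Module.End.mul_apply, LieAlgebra.ad_apply]
    rw [LieHom.map_lie, φ_T, ih]

def F (k : ℕ) : Module.End ℚ V := ((LieAlgebra.ad ℚ (Module.End ℚ V) Th) ^ k) Ah

lemma F_apply (k : ℕ) (c : ℚ) (p q : P) :
    F k (c, p, q) = (0, c • xx ^ k, xx ^ k * S p) := by
  induction k generalizing c p q with
  | zero =>
    simp [F, MvPolynomial.smul_eq_C_mul]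
  | succ k ih =>
    have : F (k + 1) = ⁅Th, F k⁆ := by
      rw [F, F, pow_succ']
      simp [Module.End.mul_apply, LieAlgebra.ad_apply]
    rw [this, Ring.lie_def]
    simp only [LinearMap.sub_apply, Module.End.mul_apply, Th_apply, ih]
    have hx1 : S xx = yy := by simpa using S_x_pow 1
    have hSx : S (xx * p) = yy * S p := by rw [S_mul, hx1]
    rw [hSx]
    rw [Prod.sub_def, Prod.sub_def]
    refine Prod.ext (by simp) (Prod.ext ?_ ?_)
    · simp only [Prod.fst, Prod.snd]
      rw [zero_smul, sub_zero, pow_succ, mul_smul_comm, mul_comm]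
    · simp only [Prod.fst, Prod.snd]
      rw [pow_succ]; ring

def v0 : V := (1, 0, 0)

lemma bracket_v0 (i j : ℕ) :
    ⁅F i, F j⁆ v0 = ((0 : ℚ), (0 : P), xx ^ i * yy ^ j - xx ^ j * yy ^ i) := by
  have h0 : ∀ k : ℕ, F k v0 = ((0:ℚ), xx ^ k, (0:P)) := fun k => by
    simpa [v0] using F_apply k 1 0 0
  have h1 : ∀ k m : ℕ, F k ((0:ℚ), xx ^ m, (0:P)) = (0, 0, xx ^ k * yy ^ m) := fun k m => by
    simpa [S_x_pow] using F_apply k 0 (xx ^ m) 0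
  rw [Ring.lie_def]
  simp only [LinearMap.sub_apply, Module.End.mul_apply, h0, h1]
  rw [Prod.sub_def, Prod.sub_def]
  simp

def mm (i j : ℕ) : Fin 2 →₀ ℕ := Finsupp.single 0 i + Finsupp.single 1 j

lemma mm_inj {i j i' j' : ℕ} (h : mm i' j' = mm i j) : i' = i ∧ j' = j := by
  constructor
  · have := DFunLike.congr_fun h 0
    simpa [mm, Finsupp.single_apply] using this
  · have := DFunLike.congr_fun h 1
    simpa [mm, Finsupp.single_apply] using this

lemma coeff_xy (i j i' j' : ℕ) :
    MvPolynomial.coeff (mm i j) (xx ^ i' * yy ^ j' : P)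
      = if i' = i ∧ j' = j then 1 else 0 := by
  rw [xx, yy, MvPolynomial.X_pow_eq_monomial, MvPolynomial.X_pow_eq_monomial,
    MvPolynomial.monomial_mul, MvPolynomial.coeff_monomial, one_mul]
  by_cases h : i' = i ∧ j' = j
  · obtain ⟨rfl, rfl⟩ := h
    simp [mm]
  · rw [if_neg h, if_neg]
    intro he
    exact h (mm_inj he)

lemma li_xy (n : ℕ) :
    LinearIndependent ℚ
      (fun p : { p : ℕ × ℕ // p.2 < p.1 ∧ p.1 + p.2 = n } =>
        (xx ^ (p : ℕ × ℕ).1 * yy ^ (p : ℕ × ℕ).2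
          - xx ^ (p : ℕ × ℕ).2 * yy ^ (p : ℕ × ℕ).1 : P)) := by
  rw [linearIndependent_iff']
  intro s g hsum p hp
  have hc := congrArg (MvPolynomial.coeff (mm (p : ℕ × ℕ).1 (p : ℕ × ℕ).2)) hsum
  rw [MvPolynomial.coeff_sum, MvPolynomial.coeff_zero] at hc
  have hterm : ∀ q ∈ s,
      MvPolynomial.coeff (mm (p : ℕ × ℕ).1 (p : ℕ × ℕ).2)
        (g q • (xx ^ (q : ℕ × ℕ).1 * yy ^ (q : ℕ × ℕ).2
          - xx ^ (q : ℕ × ℕ).2 * yy ^ (q : ℕ × ℕ).1))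
      = if q = p then g p else 0 := by
    intro q _
    rw [MvPolynomial.coeff_smul, MvPolynomial.coeff_sub, coeff_xy, coeff_xy]
    by_cases h : q = p
    · subst h
      rw [if_pos rfl, if_pos ⟨rfl, rfl⟩, if_neg, sub_zero, smul_eq_mul, mul_one]
      rintro ⟨h1, h2⟩
      have := q.prop.1
      omega
    · rw [if_neg h, if_neg, if_neg, sub_zero, smul_zero]
      · rintro ⟨h1, h2⟩
        have hq := q.prop.1
        have hp' := p.prop.1
        omega
      · rintro ⟨h1, h2⟩
        exact h (Subtype.ext (Prod.ext h1 h2))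
  rw [Finset.sum_congr rfl hterm, Finset.sum_ite_eq' s p (fun _ => g p), if_pos hp] at hc
  exact hc

/-- For each `n ≥ 1`, the family `{[ad_T^i(A), ad_T^j(A)] : i > j ≥ 0, i + j = n}` is linearly
independent in the free Lie algebra `L(T,A)` over `ℚ`. -/
theorem linearIndependent_brackets (n : ℕ) (hn : 1 ≤ n) :
    LinearIndependent ℚ
      (fun p : { p : ℕ × ℕ // p.2 < p.1 ∧ p.1 + p.2 = n } =>
        ⁅((LieAlgebra.ad ℚ L T) ^ (p : ℕ × ℕ).1) A,
          ((LieAlgebra.ad ℚ L T) ^ (p : ℕ × ℕ).2) A⁆) := by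
  let Ψ : L →ₗ[ℚ] P :=
    (LinearMap.snd ℚ P P) ∘ₗ (LinearMap.snd ℚ ℚ (P × P)) ∘ₗ
      (LinearMap.applyₗ v0) ∘ₗ φ.toLinearMap
  apply LinearIndependent.of_comp Ψ
  have hcomp : (Ψ ∘ fun p : { p : ℕ × ℕ // p.2 < p.1 ∧ p.1 + p.2 = n } =>
        ⁅((LieAlgebra.ad ℚ L T) ^ (p : ℕ × ℕ).1) A,
          ((LieAlgebra.ad ℚ L T) ^ (p : ℕ × ℕ).2) A⁆)
      = fun p : { p : ℕ × ℕ // p.2 < p.1 ∧ p.1 + p.2 = n } =>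
          (xx ^ (p : ℕ × ℕ).1 * yy ^ (p : ℕ × ℕ).2
          - xx ^ (p : ℕ × ℕ).2 * yy ^ (p : ℕ × ℕ).1 : P) := by
    funext p
    show ((φ ⁅((LieAlgebra.ad ℚ L T) ^ (p : ℕ × ℕ).1) A,
          ((LieAlgebra.ad ℚ L T) ^ (p : ℕ × ℕ).2) A⁆) v0).2.2 = _
    rw [LieHom.map_lie, φ_ad_pow, φ_ad_pow]
    exact congrArg (fun v : V => v.2.2) (bracket_v0 (p : ℕ × ℕ).1 (p : ℕ × ℕ).2)
  rw [hcomp]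
  exact li_xy n

end Stmt14
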